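/- Upper bound in L_q for the truncation method: assume additionally that there are constants c₁, c₂ > 0 such that for every N, (Σ_{k=0}^{N} μ_k²)^{1/2} ≤ c₁ μ_N and (Σ_{k=N}^{∞} μ_k²/ξ_k²)^{1/2} ≤ c₂ μ_N/ξ_N. Then for any 2 ≤ q ≤ ∞, any δ > 0 and any N ≥ 1, ε_δ(A,W,G̃_N,Ψ̃_N,L_q) ≤ max{c₁,c₂} · |Q|^{1/q} · χ · ( μ_N/ξ_N + δ μ_{N−1} ). -/

import Mathlib

noncomputable section

open Filter MeasureTheory
open scoped ENNReal RealInnerProductSpace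

variable {d : ℕ} (ν : MeasureTheory.Measure (EuclideanSpace ℝ (Fin d)))


/-- Coercion of a finite sum in `Lp` is a.e. the sum of the coercions. -/
private lemma myCoeFn_finset_sum {α : Type*} {m : MeasurableSpace α} {ν : Measure α}
    (s : Finset ℕ) (f : ℕ → Lp ℝ 2 ν) :
    (((∑ i ∈ s, f i : Lp ℝ 2 ν) : α → ℝ)) =ᵐ[ν] fun x => ∑ i ∈ s, (f i : α → ℝ) x := by
  classical
  induction s using Finset.induction_on with
  | empty => simp only [Finset.sum_empty]; exact Lp.coeFn_zero ℝ 2 ν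
  | @insert a s ha ih =>
      rw [Finset.sum_insert ha]
      filter_upwards [Lp.coeFn_add (f a) (∑ i ∈ s, f i), ih] with x hx hx2
      simp only [hx, Pi.add_apply, hx2, Finset.sum_insert ha]

/-- Cauchy–Schwarz for tsums of nonnegative reals. -/
private lemma myTsum_mul_le (f g : ℕ → ℝ) (hf : ∀ k, 0 ≤ f k) (hg : ∀ k, 0 ≤ g k)
    (h1 : Summable fun k => f k ^ 2) (h2 : Summable fun k => g k ^ 2) :
    Summable (fun k => f k * g k) ∧
      ∑' k, f k * g k ≤ Real.sqrt (∑' k, f k ^ 2) * Real.sqrt (∑' k, g k ^ 2) := by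
  have hs : Summable fun k => f k * g k := by
    apply Summable.of_nonneg_of_le (fun k => mul_nonneg (hf k) (hg k))
      (fun k => ?_) ((h1.add h2).div_const 2)
    nlinarith [sq_nonneg (f k - g k)]
  refine ⟨hs, Summable.tsum_le_of_sum_le hs fun s => ?_⟩
  refine (Real.sum_mul_le_sqrt_mul_sqrt s f g).trans ?_
  have e1 : ∑ i ∈ s, f i ^ 2 ≤ ∑' k, f k ^ 2 := Summable.sum_le_tsum s (fun k _ => sq_nonneg _) h1
  have e2 : ∑ i ∈ s, g i ^ 2 ≤ ∑' k, g k ^ 2 := Summable.sum_le_tsum s (fun k _ => sq_nonneg _) h2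
  exact mul_le_mul (Real.sqrt_le_sqrt e1) (Real.sqrt_le_sqrt e2) (Real.sqrt_nonneg _)
    (Real.sqrt_nonneg _)

private lemma myDivMul (m x y : ℝ) (hx : x ≠ 0) : m / x * (x * y) = m * y := by
  field_simp

/-- If the coefficients are absolutely summable and the `w k` are a.e. bounded unit
vectors, then the `L²` tsum is a.e. bounded. -/
private lemma myAe_bound_tsum {α : Type*} [MeasurableSpace α] {ν : Measure α}
    (w : ℕ → Lp ℝ 2 ν) (hnorm : ∀ k, ‖w k‖ = 1) {χ : ℝ}
    (hbd : ∀ k, ∀ᵐ x ∂ν, |(w k : α → ℝ) x| ≤ χ)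
    (c : ℕ → ℝ) (hc : Summable fun k => |c k|) :
    ∀ᵐ x ∂ν, |((∑' k, c k • w k : Lp ℝ 2 ν) : α → ℝ) x| ≤ (∑' k, |c k|) * χ := by
  have hsummable : Summable fun k => c k • w k := by
    apply Summable.of_norm
    have : (fun k => ‖c k • w k‖) = fun k => |c k| := by
      funext k; rw [norm_smul, hnorm k, mul_one, Real.norm_eq_abs]
    rwa [this]
  have hS : Tendsto (fun n => ∑ i ∈ Finset.range n, c i • w i) atTop
      (nhds (∑' k, c k • w k)) := hsummable.hasSum.tendsto_sum_nat
  have hm : TendstoInMeasure ν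
      (fun n => (((∑ i ∈ Finset.range n, c i • w i : Lp ℝ 2 ν)) : α → ℝ)) atTop
      ((∑' k, c k • w k : Lp ℝ 2 ν) : α → ℝ) := tendstoInMeasure_of_tendsto_Lp hS
  obtain ⟨ns, -, hae⟩ := hm.exists_seq_tendsto_ae
  have heq : ∀ n, (((∑ i ∈ Finset.range n, c i • w i : Lp ℝ 2 ν)) : α → ℝ) =ᵐ[ν]
      fun x => ∑ i ∈ Finset.range n, c i * (w i : α → ℝ) x := by
    intro n
    filter_upwards [myCoeFn_finset_sum (Finset.range n) (fun i => c i • w i),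
      ae_all_iff.2 fun i => Lp.coeFn_smul (c i) (w i)] with x hx hx2
    rw [hx]
    exact Finset.sum_congr rfl fun i _ => by rw [hx2 i]; rfl
  filter_upwards [hae, ae_all_iff.2 heq, ae_all_iff.2 hbd] with x hx1 hx2 hx3
  have hχ0 : 0 ≤ χ := (abs_nonneg _).trans (hx3 0)
  refine le_of_tendsto hx1.abs (Filter.Eventually.of_forall fun i => ?_)
  rw [hx2 (ns i)]
  calc |∑ k ∈ Finset.range (ns i), c k * (w k : α → ℝ) x|
      ≤ ∑ k ∈ Finset.range (ns i), |c k| * χ := by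
        refine (Finset.abs_sum_le_sum_abs _ _).trans (Finset.sum_le_sum fun k _ => ?_)
        rw [abs_mul]
        exact mul_le_mul_of_nonneg_left (hx3 k) (abs_nonneg _)
    _ = (∑ k ∈ Finset.range (ns i), |c k|) * χ := (Finset.sum_mul _ _ _).symm
    _ ≤ (∑' k, |c k|) * χ :=
        mul_le_mul_of_nonneg_right (Summable.sum_le_tsum _ (fun _ _ => abs_nonneg _) hc) hχ0


/-- `f` belongs to the source set `W`. -/
def MemW (w : ℕ → Lp ℝ 2 ν) (ξ : ℕ → ℝ) (f : Lp ℝ 2 ν) : Prop :=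
  Summable fun k => ξ k ^ 2 * ⟪f, w k⟫ ^ 2

/-- The `W`-norm of `f`. -/
def normW (w : ℕ → Lp ℝ 2 ν) (ξ : ℕ → ℝ) (f : Lp ℝ 2 ν) : ℝ :=
  Real.sqrt (∑' k, ξ k ^ 2 * ⟪f, w k⟫ ^ 2)

/-- The unbounded operator `A`, defined spectrally by `A f = ∑ μ_k ⟨f, w_k⟩ w_k`. -/
def opA (w : ℕ → Lp ℝ 2 ν) (μ : ℕ → ℝ) (f : Lp ℝ 2 ν) : Lp ℝ 2 ν :=
  ∑' k, (μ k * ⟪f, w k⟫) • w k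

/-- The worst case recovery error `ε_δ(A, W, G, Ψ, L_q)` of the pair `(G, Ψ)`,
measured in the `L_q` (semi)norm, `q = p`. -/
def recErrLq (w : ℕ → Lp ℝ 2 ν) (μ ξ : ℕ → ℝ) (p : ℝ≥0∞) (δ : ℝ) {N : ℕ}
    (G : Lp ℝ 2 ν → Fin N → ℝ) (Ψ : (Fin N → ℝ) → Lp ℝ p ν) : ℝ≥0∞ :=
  ⨆ (f : Lp ℝ 2 ν) (_ : MemW ν w ξ f ∧ normW ν w ξ f ≤ 1)
    (fδ : Lp ℝ 2 ν) (_ : ‖f - fδ‖ ≤ δ),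
      eLpNorm (fun x => (opA ν w μ f : EuclideanSpace ℝ (Fin d) → ℝ) x -
        (Ψ (G fδ) : EuclideanSpace ℝ (Fin d) → ℝ) x) p ν

/-- The `(N,δ)`-optimal recovery error `R_{N,δ}(A, W, L_q)`, `q = p`. -/
def RoptLq (w : ℕ → Lp ℝ 2 ν) (μ ξ : ℕ → ℝ) (p : ℝ≥0∞) (δ : ℝ) (N : ℕ) : ℝ≥0∞ :=
  ⨅ (G : Lp ℝ 2 ν → Fin N → ℝ) (_ : Continuous G) (Ψ : (Fin N → ℝ) → Lp ℝ p ν),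
    recErrLq ν w μ ξ p δ G Ψ

/-- The `δ`-optimal recovery error `R_δ(A, W, L_q)`, `q = p`. -/
def RoptAllLq (w : ℕ → Lp ℝ 2 ν) (μ ξ : ℕ → ℝ) (p : ℝ≥0∞) (δ : ℝ) : ℝ≥0∞ :=
  ⨅ N : ℕ, RoptLq ν w μ ξ p δ N

/-- The critical index `N_δ = min {N ≥ 0 : ξ_N ≥ 1/δ}`. -/
def Ncrit (ξ : ℕ → ℝ) (δ : ℝ) : ℕ := sInf {N : ℕ | 1 / δ ≤ ξ N}

/-- The information map of the truncation method: the first `N` Fourier coefficients. -/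
def Gtrunc (w : ℕ → Lp ℝ 2 ν) (N : ℕ) (f : Lp ℝ 2 ν) : Fin N → ℝ := fun k => ⟪f, w k⟫

/-- The recovery algorithm of the truncation method (as an element of `L_2`). -/
def Psitrunc (w : ℕ → Lp ℝ 2 ν) (μ : ℕ → ℝ) (N : ℕ) (x : Fin N → ℝ) : Lp ℝ 2 ν :=
  ∑ k : Fin N, (μ k * x k) • w k

/-- The worst case `L_q`-error of the truncation method, `q = p`. -/
def truncErrLq (w : ℕ → Lp ℝ 2 ν) (μ ξ : ℕ → ℝ) (p : ℝ≥0∞) (δ : ℝ) (N : ℕ) : ℝ≥0∞ :=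
  ⨆ (f : Lp ℝ 2 ν) (_ : MemW ν w ξ f ∧ normW ν w ξ f ≤ 1)
    (fδ : Lp ℝ 2 ν) (_ : ‖f - fδ‖ ≤ δ),
      eLpNorm (fun x => (opA ν w μ f : EuclideanSpace ℝ (Fin d) → ℝ) x -
        (Psitrunc ν w μ N (Gtrunc ν w N fδ) : EuclideanSpace ℝ (Fin d) → ℝ) x) p ν

set_option maxHeartbeats 1000000 in
set_option synthInstance.maxHeartbeats 400000 in
/-- upper bound in `L_q` for the truncation method. -/
theorem stmt15
    (Q : Set (EuclideanSpace ℝ (Fin d))) (hQc : IsCompact Q)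
    (hQ0 : 0 < MeasureTheory.volume Q) (hQfin : MeasureTheory.volume Q < ⊤)
    (w : ℕ → Lp ℝ 2 (MeasureTheory.volume.restrict Q)) (hw_on : Orthonormal ℝ w)
    (hw_dense : Dense (Submodule.span ℝ (Set.range w) : Set (Lp ℝ 2 (MeasureTheory.volume.restrict Q))))
    (χ : ℝ) (hχ : 0 < χ)
    (hw_cont : ∀ k : ℕ, ∃ g : EuclideanSpace ℝ (Fin d) → ℝ, ContinuousOn g Q ∧
      (∀ x ∈ Q, |g x| ≤ χ) ∧ (w k : EuclideanSpace ℝ (Fin d) → ℝ) =ᵐ[MeasureTheory.volume.restrict Q] g)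
    (μ ξ : ℕ → ℝ)
    (hμ0 : 0 < μ 0) (hμmono : Monotone μ) (hμtop : Tendsto μ atTop atTop)
    (hξ0 : 0 < ξ 0) (hξmono : Monotone ξ) (hξtop : Tendsto ξ atTop atTop)
    (hanti : Antitone fun k => μ k / ξ k)
    (hratio : Tendsto (fun k => μ k / ξ k) atTop (nhds 0))
    (c₁ c₂ : ℝ) (hc₁ : 0 < c₁) (hc₂ : 0 < c₂)
    (hsum : Summable fun k => (μ k / ξ k) ^ 2)
    (hc₁' : ∀ N : ℕ, Real.sqrt (∑ k ∈ Finset.range (N + 1), μ k ^ 2) ≤ c₁ * μ N)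
    (hc₂' : ∀ N : ℕ, Real.sqrt (∑' j : ℕ, (μ (N + j) / ξ (N + j)) ^ 2) ≤ c₂ * (μ N / ξ N)) :
    ∀ p : ℝ≥0∞, 2 ≤ p → ∀ δ : ℝ, 0 < δ → ∀ N : ℕ, 1 ≤ N →
      truncErrLq (MeasureTheory.volume.restrict Q) w μ ξ p δ N ≤
        MeasureTheory.volume Q ^ (1 / p).toReal *
          ENNReal.ofReal (max c₁ c₂ * χ * (μ N / ξ N + δ * μ (N - 1))) := by
  
    intro p hp δ hδ N hN
    obtain ⟨M, rfl⟩ : ∃ M, N = M + 1 := ⟨N - 1, (Nat.succ_pred_eq_of_pos hN).symm⟩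
    simp only [Nat.add_sub_cancel]
    set N := M + 1 with hNdef
    
    -- positivity of μ, ξ
    have hμpos : ∀ k, 0 < μ k := fun k => lt_of_lt_of_le hμ0 (hμmono (Nat.zero_le k))
    have hξpos : ∀ k, 0 < ξ k := fun k => lt_of_lt_of_le hξ0 (hξmono (Nat.zero_le k))
    -- a.e. bound on the w k
    have hQm : MeasurableSet Q := hQc.isClosed.measurableSet
    have hbd : ∀ k, ∀ᵐ x ∂(MeasureTheory.volume.restrict Q), |(w k : EuclideanSpace ℝ (Fin d) → ℝ) x| ≤ χ := by
      intro k
      obtain ⟨g, -, hgbd, haeg⟩ := hw_cont k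
      filter_upwards [haeg, ae_restrict_mem hQm] with x h1 h2
      rw [h1]; exact hgbd x h2
    unfold truncErrLq
    refine iSup_le fun f => iSup_le fun hf => iSup_le fun fδ => iSup_le fun hfδ => ?_
    -- notation
    set a : ℕ → ℝ := fun k => ⟪f, w k⟫ with ha
    set b : ℕ → ℝ := fun k => ⟪fδ, w k⟫ with hb
    set c : ℕ → ℝ := fun k => if k < N then μ k * (a k - b k) else μ k * a k with hcdef
    -- summability facts
    have hGsq : Summable fun k => (ξ k * |a k|) ^ 2 := by
      have := hf.1
      unfold MemW at this
      refine this.congr fun k => ?_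
      rw [mul_pow, sq_abs]
    have hT1 : ∑' k, (ξ k * |a k|) ^ 2 ≤ 1 := by
      have h0 : 0 ≤ ∑' k, (ξ k * |a k|) ^ 2 := tsum_nonneg fun k => sq_nonneg _
      have h2 : Real.sqrt (∑' k, (ξ k * |a k|) ^ 2) ≤ 1 := by
        have := hf.2
        unfold normW at this
        refine le_trans (le_of_eq ?_) this
        congr 1
        exact tsum_congr fun k => by rw [mul_pow, sq_abs]
      nlinarith [Real.sq_sqrt h0, Real.sqrt_nonneg (∑' k, (ξ k * |a k|) ^ 2)]
    have hmulsum : Summable fun k => μ k * |a k| := by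
      have h := (myTsum_mul_le (fun k => μ k / ξ k) (fun k => ξ k * |a k|)
        (fun k => le_of_lt (div_pos (hμpos k) (hξpos k)))
        (fun k => mul_nonneg (hξpos k).le (abs_nonneg _)) hsum hGsq).1
      refine h.congr fun k => ?_
      exact myDivMul _ _ _ (hξpos k).ne'
    have hcsum : Summable fun k => |c k| := by
      refine (summable_nat_add_iff N).mp ?_
      have : (fun n : ℕ => |c (n + N)|) = fun n => μ (n + N) * |a (n + N)| := by
        funext n
        simp only [hcdef, if_neg (by omega : ¬ n + N < N)]
        rw [abs_mul, abs_of_pos (hμpos _)]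
      rw [this]
      exact (summable_nat_add_iff N).mpr hmulsum
    -- head bound
    have hbes : ∑ k ∈ Finset.range N, (a k - b k) ^ 2 ≤ δ ^ 2 := by
      have h1 := hw_on.sum_inner_products_le (s := Finset.range N) (f - fδ)
      have h2 : ∀ k, (⟪w k, f - fδ⟫ : ℝ) = a k - b k := fun k => by
        rw [real_inner_comm, inner_sub_left]
      calc ∑ k ∈ Finset.range N, (a k - b k) ^ 2
          = ∑ k ∈ Finset.range N, ‖(⟪w k, f - fδ⟫ : ℝ)‖ ^ 2 := by
            refine Finset.sum_congr rfl fun k _ => ?_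
            rw [h2 k, Real.norm_eq_abs, sq_abs]
        _ ≤ ‖f - fδ‖ ^ 2 := h1
        _ ≤ δ ^ 2 := by
            have := norm_nonneg (f - fδ)
            nlinarith
    have hhead : ∑ k ∈ Finset.range N, |c k| ≤ c₁ * μ M * δ := by
      have h1 : ∑ k ∈ Finset.range N, |c k|
          = ∑ k ∈ Finset.range N, μ k * |a k - b k| := by
        refine Finset.sum_congr rfl fun k hk => ?_
        simp only [hcdef, if_pos (Finset.mem_range.mp hk)]
        rw [abs_mul, abs_of_pos (hμpos _)]
      have h2 := Real.sum_mul_le_sqrt_mul_sqrt (Finset.range N) μ (fun k => |a k - b k|)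
      have h3 : Real.sqrt (∑ k ∈ Finset.range N, μ k ^ 2) ≤ c₁ * μ M := hc₁' M
      have h4 : Real.sqrt (∑ k ∈ Finset.range N, |a k - b k| ^ 2) ≤ δ := by
        have : ∑ k ∈ Finset.range N, |a k - b k| ^ 2 ≤ δ ^ 2 := by
          refine le_trans (le_of_eq ?_) hbes
          exact Finset.sum_congr rfl fun k _ => sq_abs _
        calc Real.sqrt (∑ k ∈ Finset.range N, |a k - b k| ^ 2)
            ≤ Real.sqrt (δ ^ 2) := Real.sqrt_le_sqrt this
          _ = δ := Real.sqrt_sq hδ.le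
      rw [h1]
      calc ∑ k ∈ Finset.range N, μ k * |a k - b k|
          ≤ Real.sqrt (∑ k ∈ Finset.range N, μ k ^ 2) *
              Real.sqrt (∑ k ∈ Finset.range N, |a k - b k| ^ 2) := h2
        _ ≤ (c₁ * μ M) * δ := by
            refine mul_le_mul h3 h4 (Real.sqrt_nonneg _) ?_
            exact le_trans (Real.sqrt_nonneg _) h3
    -- tail bound
    have htail : ∑' n : ℕ, |c (n + N)| ≤ c₂ * (μ N / ξ N) := by
      have hFs : Summable fun n : ℕ => (μ (n + N) / ξ (n + N)) ^ 2 :=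
        (summable_nat_add_iff N).mpr hsum
      have hGs : Summable fun n : ℕ => (ξ (n + N) * |a (n + N)|) ^ 2 :=
        (summable_nat_add_iff N).mpr hGsq
      have hcs := myTsum_mul_le (fun n => μ (n + N) / ξ (n + N))
        (fun n => ξ (n + N) * |a (n + N)|)
        (fun n => le_of_lt (div_pos (hμpos _) (hξpos _)))
        (fun n => mul_nonneg (hξpos _).le (abs_nonneg _)) hFs hGs
      have heqc : (fun n : ℕ => |c (n + N)|)
          = fun n => (μ (n + N) / ξ (n + N)) * (ξ (n + N) * |a (n + N)|) := by
        funext n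
        simp only [hcdef, if_neg (by omega : ¬ n + N < N)]
        rw [abs_mul, abs_of_pos (hμpos _)]
        exact (myDivMul _ _ _ (hξpos _).ne').symm
      have hsq1 : Real.sqrt (∑' n : ℕ, (μ (n + N) / ξ (n + N)) ^ 2) ≤ c₂ * (μ N / ξ N) := by
        have := hc₂' N
        refine le_trans (le_of_eq ?_) this
        congr 1
        exact tsum_congr fun n => by rw [add_comm]
      have hsq2 : Real.sqrt (∑' n : ℕ, (ξ (n + N) * |a (n + N)|) ^ 2) ≤ 1 := by
        have htail_le : ∑' n : ℕ, (ξ (n + N) * |a (n + N)|) ^ 2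
            ≤ ∑' k, (ξ k * |a k|) ^ 2 := by
          have hsplit := Summable.sum_add_tsum_nat_add (f := fun k => (ξ k * |a k|) ^ 2) N hGsq
          have hnn : 0 ≤ ∑ k ∈ Finset.range N, (ξ k * |a k|) ^ 2 :=
            Finset.sum_nonneg fun k _ => sq_nonneg _
          linarith
        calc Real.sqrt (∑' n : ℕ, (ξ (n + N) * |a (n + N)|) ^ 2)
            ≤ Real.sqrt (∑' k, (ξ k * |a k|) ^ 2) := Real.sqrt_le_sqrt htail_le
          _ ≤ Real.sqrt 1 := Real.sqrt_le_sqrt hT1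
          _ = 1 := Real.sqrt_one
      calc ∑' n : ℕ, |c (n + N)|
          = ∑' n : ℕ, (μ (n + N) / ξ (n + N)) * (ξ (n + N) * |a (n + N)|) := by rw [heqc]
        _ ≤ Real.sqrt (∑' n : ℕ, (μ (n + N) / ξ (n + N)) ^ 2) *
              Real.sqrt (∑' n : ℕ, (ξ (n + N) * |a (n + N)|) ^ 2) := hcs.2
        _ ≤ (c₂ * (μ N / ξ N)) * 1 := by
            refine mul_le_mul hsq1 hsq2 (Real.sqrt_nonneg _) ?_
            exact le_trans (Real.sqrt_nonneg _) hsq1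
        _ = c₂ * (μ N / ξ N) := mul_one _
    -- total bound on B
    have hB : ∑' k, |c k| ≤ c₁ * μ M * δ + c₂ * (μ N / ξ N) := by
      have hsplit := Summable.sum_add_tsum_nat_add (f := fun k => |c k|) N hcsum
      linarith
    -- the difference is the tsum with coefficients c
    have hsum1 : Summable fun k => (μ k * a k) • w k := by
      apply Summable.of_norm
      have : (fun k => ‖(μ k * a k) • w k‖) = fun k => μ k * |a k| := by
        funext k
        rw [norm_smul, hw_on.1 k, mul_one, Real.norm_eq_abs, abs_mul, abs_of_pos (hμpos _)]
      rwa [this]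
    set e : ℕ → Lp ℝ 2 (MeasureTheory.volume.restrict Q) := fun k => if k < N then (μ k * b k) • w k else 0 with hedef
    have hsum2 : Summable e :=
      summable_of_ne_finset_zero (s := Finset.range N)
        (fun k hk => by simp only [hedef]; exact if_neg (by simpa using hk))
    have hPsi : Psitrunc (MeasureTheory.volume.restrict Q) w μ N (Gtrunc (MeasureTheory.volume.restrict Q) w N fδ) = ∑' k, e k := by
      have h1 : ∑' k, e k = ∑ k ∈ Finset.range N, (μ k * b k) • w k := by
        rw [tsum_eq_sum (s := Finset.range N)
          (fun k hk => by simp only [hedef]; exact if_neg (by simpa using hk))]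
        exact Finset.sum_congr rfl fun k hk => by
          simp only [hedef]; exact if_pos (Finset.mem_range.mp hk)
      rw [h1, ← Fin.sum_univ_eq_sum_range (fun k => (μ k * b k) • w k) N]
      unfold Psitrunc Gtrunc
      exact Finset.sum_congr rfl fun k _ => by rw [hb]
    have hdiff : opA (MeasureTheory.volume.restrict Q) w μ f - Psitrunc (MeasureTheory.volume.restrict Q) w μ N (Gtrunc (MeasureTheory.volume.restrict Q) w N fδ) = ∑' k, c k • w k := by
      rw [show opA (MeasureTheory.volume.restrict Q) w μ f = ∑' k, (μ k * a k) • w k from rfl, hPsi, ← Summable.tsum_sub hsum1 hsum2]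
      refine tsum_congr fun k => ?_
      by_cases hk : k < N
      · simp only [hedef, hcdef, if_pos hk]
        rw [mul_sub, sub_smul]
      · simp only [hedef, hcdef, if_neg hk]
        rw [sub_zero]
    -- a.e. bound of the difference
    have hc_bd := myAe_bound_tsum w hw_on.1 hbd c hcsum
    have key : ∀ᵐ x ∂(MeasureTheory.volume.restrict Q),
        ‖(opA (MeasureTheory.volume.restrict Q) w μ f : EuclideanSpace ℝ (Fin d) → ℝ) x -
          (Psitrunc (MeasureTheory.volume.restrict Q) w μ N (Gtrunc (MeasureTheory.volume.restrict Q) w N fδ) : EuclideanSpace ℝ (Fin d) → ℝ) x‖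
          ≤ (∑' k, |c k|) * χ := by
      filter_upwards [Lp.coeFn_sub (opA (MeasureTheory.volume.restrict Q) w μ f) (Psitrunc (MeasureTheory.volume.restrict Q) w μ N (Gtrunc (MeasureTheory.volume.restrict Q) w N fδ)),
        hc_bd] with x h1 h2
      rw [Real.norm_eq_abs]
      have h3 : (opA (MeasureTheory.volume.restrict Q) w μ f : EuclideanSpace ℝ (Fin d) → ℝ) x -
          (Psitrunc (MeasureTheory.volume.restrict Q) w μ N (Gtrunc (MeasureTheory.volume.restrict Q) w N fδ) : EuclideanSpace ℝ (Fin d) → ℝ) x =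
          ((opA (MeasureTheory.volume.restrict Q) w μ f - Psitrunc (MeasureTheory.volume.restrict Q) w μ N (Gtrunc (MeasureTheory.volume.restrict Q) w N fδ) : Lp ℝ 2 (MeasureTheory.volume.restrict Q)) :
            EuclideanSpace ℝ (Fin d) → ℝ) x := by rw [h1]; rfl
      rw [h3, hdiff]
      exact h2
    -- conclude
    have hfinal : (∑' k, |c k|) * χ ≤ max c₁ c₂ * χ * (μ N / ξ N + δ * μ M) := by
      have h1 : c₁ ≤ max c₁ c₂ := le_max_left _ _
      have h2 : c₂ ≤ max c₁ c₂ := le_max_right _ _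
      have h3 : 0 ≤ μ N / ξ N := le_of_lt (div_pos (hμpos _) (hξpos _))
      have h4 : 0 ≤ δ * μ M := mul_nonneg hδ.le (hμpos _).le
      have h5 : ∑' k, |c k| ≤ max c₁ c₂ * (μ N / ξ N + δ * μ M) := by
        nlinarith [hB]
      nlinarith [hχ.le, (tsum_nonneg (fun k => abs_nonneg (c k)) : 0 ≤ ∑' k, |c k|)]
    calc eLpNorm (fun x => (opA (MeasureTheory.volume.restrict Q) w μ f : EuclideanSpace ℝ (Fin d) → ℝ) x -
          (Psitrunc (MeasureTheory.volume.restrict Q) w μ N (Gtrunc (MeasureTheory.volume.restrict Q) w N fδ) : EuclideanSpace ℝ (Fin d) → ℝ) x) p (MeasureTheory.volume.restrict Q)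
        ≤ (MeasureTheory.volume.restrict Q) Set.univ ^ p.toReal⁻¹ * ENNReal.ofReal ((∑' k, |c k|) * χ) :=
          eLpNorm_le_of_ae_bound key
      _ ≤ MeasureTheory.volume Q ^ (1 / p).toReal *
            ENNReal.ofReal (max c₁ c₂ * χ * (μ N / ξ N + δ * μ M)) := by
          rw [Measure.restrict_apply_univ, one_div, ENNReal.toReal_inv]
          exact mul_le_mul_right (ENNReal.ofReal_le_ofReal hfinal) _
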